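/- In the Ariki–Koike algebra H, suppose 1 ≤ l < m ≤ n and 1 ≤ t ≤ p. Then T_i L^(t)_{l,m} = L^(t)_{l,m} T_i and L_j L^(t)_{l,m} = L^(t)_{l,m} L_j, for all i, j with 1 ≤ i < n, 1 ≤ j ≤ n, i ≠ l−1 and i ≠ m. -/

import Mathlib

noncomputable section

namespace AK

/-- The generator `T_i` inside the free algebra on `n` generators
(defined as `0` for the never-used out-of-range indices). -/
def gen (R : Type*) [CommRing R] (n : ℕ) (i : ℕ) : FreeAlgebra R (Fin n) :=
  if h : i < n then FreeAlgebra.ι R (⟨i, h⟩ : Fin n) else 0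

/-- The defining relations of the Ariki–Koike algebra `H_{r,n}` with `r = p * d` and
cyclotomic parameters `(ε Q_1, …, ε Q_d, ε² Q_1, …, ε^p Q_d)`:
`∏_{t=1}^{p} ∏_{i=1}^{d} (T_0 - ε^t Q_i) = 0`; `(T_i - q)(T_i + 1) = 0` for `1 ≤ i ≤ n-1`;
`T_0T_1T_0T_1 = T_1T_0T_1T_0`; `T_{i+1}T_iT_{i+1} = T_iT_{i+1}T_i` for `1 ≤ i ≤ n-2`; and
`T_iT_j = T_jT_i` for `0 ≤ i < j-1 ≤ n-2`. -/
inductive Rel (R : Type*) [CommRing R] (n p d : ℕ) (ε q : R) (Q : Fin d → R) :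
    FreeAlgebra R (Fin n) → FreeAlgebra R (Fin n) → Prop
  | cyclotomic :
      Rel R n p d ε q Q
        (Polynomial.aeval (gen R n 0)
          (∏ t ∈ Finset.Icc 1 p, ∏ i : Fin d, (Polynomial.X - Polynomial.C (ε ^ t * Q i)))) 0
  | quadratic (i : ℕ) (h1 : 1 ≤ i) (h2 : i ≤ n - 1) :
      Rel R n p d ε q Q
        ((gen R n i - algebraMap R (FreeAlgebra R (Fin n)) q) * (gen R n i + 1)) 0
  | braid0 :
      Rel R n p d ε q Q
        (gen R n 0 * gen R n 1 * gen R n 0 * gen R n 1)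
        (gen R n 1 * gen R n 0 * gen R n 1 * gen R n 0)
  | braid (i : ℕ) (h1 : 1 ≤ i) (h2 : i ≤ n - 2) :
      Rel R n p d ε q Q
        (gen R n (i + 1) * gen R n i * gen R n (i + 1))
        (gen R n i * gen R n (i + 1) * gen R n i)
  | comm (i j : ℕ) (h1 : i < j - 1) (h2 : j - 1 ≤ n - 2) :
      Rel R n p d ε q Q (gen R n i * gen R n j) (gen R n j * gen R n i)

/-- The Ariki–Koike algebra `H_{r,n}`, `r = p * d`: the quotient of the free `R`-algebra on the
`n` generators `T_0, …, T_{n-1}` by the two-sided ideal generated by the defining relations. -/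
abbrev H (R : Type*) [CommRing R] (n p d : ℕ) (ε q : R) (Q : Fin d → R) :=
  RingQuot (Rel R n p d ε q Q)

/-- The images `T_i` of the generators in the Ariki–Koike algebra. -/
def T (R : Type*) [CommRing R] (n p d : ℕ) (ε q : R) (Q : Fin d → R) (i : ℕ) :
    H R n p d ε q Q :=
  RingQuot.mkAlgHom R (Rel R n p d ε q Q) (gen R n i)

/-- The Jucys–Murphy elements: `L_1 = T_0` and `L_{k+1} = q⁻¹ T_k L_k T_k` for `1 ≤ k < n`. -/
def L (R : Type*) [CommRing R] (n p d : ℕ) (ε q : R) (Q : Fin d → R) : ℕ → H R n p d ε q Q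
  | 0 => 1
  | 1 => T R n p d ε q Q 0
  | (k + 2) =>
      algebraMap R (H R n p d ε q Q) (Ring.inverse q) * T R n p d ε q Q (k + 1) *
        L R n p d ε q Q (k + 1) * T R n p d ε q Q (k + 1)

/-- `ε ^ s` for an integer exponent `s`, read modulo `p`. -/
def epow (R : Type*) [CommRing R] (p : ℕ) (ε : R) (s : ℤ) : R := ε ^ (s % (p : ℤ)).toNat

/-- `L^{(s)}_k = ∏_{i=1}^{d} (L_k - ε^s Q_i)` (depending only on `s` mod `p`). -/
def Ls (R : Type*) [CommRing R] (n p d : ℕ) (ε q : R) (Q : Fin d → R) (s : ℤ) (k : ℕ) :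
    H R n p d ε q Q :=
  Polynomial.aeval (L R n p d ε q Q k)
    (∏ i : Fin d, (Polynomial.X - Polynomial.C (epow R p ε s * Q i)))

/-- `∏_{l ≤ k ≤ m} ∏_{lo ≤ s ≤ hi} L^{(s)}_k`, for a consecutive range `lo..hi` of
superscripts (read modulo `p`). -/
def LLg (R : Type*) [CommRing R] (n p d : ℕ) (ε q : R) (Q : Fin d → R)
    (lo hi : ℤ) (l m : ℕ) : H R n p d ε q Q :=
  ((List.range (m + 1 - l)).map fun (x : ℕ) =>
    ((List.range (hi + 1 - lo).toNat).map fun (y : ℕ) =>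
      Ls R n p d ε q Q (lo + (y : ℤ)) (l + x)).prod).prod

/-- `L^{(t)}_{l,m} = ∏_{l ≤ k ≤ m} L^{(t)}_k`. -/
def Lt (R : Type*) [CommRing R] (n p d : ℕ) (ε q : R) (Q : Fin d → R)
    (t : ℤ) (l m : ℕ) : H R n p d ε q Q :=
  LLg R n p d ε q Q t t l m

/-- `L^{(i,j)}_{l,m} = ∏_{l ≤ k ≤ m} ∏_{s ∈ I_{ij}} L^{(s)}_k` where `I_{ij} = {i, …, j}` if
`i ≤ j` and `I_{ij} = {1, …, j} ∪ {i, …, p}` if `i > j` (as sets of exponents modulo `p`,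
`I_{ij}` is the consecutive range `i, i+1, …, j + p` when `i > j`). -/
def LL (R : Type*) [CommRing R] (n p d : ℕ) (ε q : R) (Q : Fin d → R)
    (i j : ℕ) (l m : ℕ) : H R n p d ε q Q :=
  LLg R n p d ε q Q (i : ℤ) (if i ≤ j then (j : ℤ) else (j : ℤ) + (p : ℤ)) l m

/-- `T^{⟨k⟩}_{a,b} = (T_{a+b+k-1} T_{a+b+k-2} ⋯ T_{k+1})^b`, and `T_{a,b} = T^{⟨0⟩}_{a,b}`. -/
def Tw (R : Type*) [CommRing R] (n p d : ℕ) (ε q : R) (Q : Fin d → R)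
    (k a b : ℕ) : H R n p d ε q Q :=
  (((List.range (a + b - 1)).map fun (j : ℕ) => T R n p d ε q Q (a + b + k - 1 - j)).prod) ^ b

/-- Partial sums `b_i^j = b_i + b_{i+1} + ⋯ + b_j` (zero when `i > j`). -/
def Bsum (b : ℕ → ℕ) (i j : ℕ) : ℕ := ∑ t ∈ Finset.Icc i j, b t

/-- The element `v_b^{(t)}`; `v_b = v_b^{(0)}` is
`L^{(1,p-1)}_{1,b_p} T_{b_p,b_1^{p-1}} L^{(1,p-2)}_{1,b_{p-1}} T_{b_{p-1},b_1^{p-2}} ⋯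
L^{(1,1)}_{1,b_2} T_{b_2,b_1^1} ⋅ L^{(2)}_{1,b_1^1} L^{(3)}_{1,b_1^2} ⋯ L^{(p)}_{1,b_1^{p-1}}`
and `v_b^{(t)}` is obtained by shifting every superscript `s` to `s + t`. -/
def v (R : Type*) [CommRing R] (n p d : ℕ) (ε q : R) (Q : Fin d → R)
    (b : ℕ → ℕ) (t : ℤ) : H R n p d ε q Q :=
  (((List.range (p - 1)).map fun (x : ℕ) =>
      LLg R n p d ε q Q (1 + t) (((p - 1 - x : ℕ) : ℤ) + t) 1 (b (p - x)) *
        Tw R n p d ε q Q 0 (b (p - x)) (Bsum b 1 (p - 1 - x))).prod) *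
  (((List.range (p - 1)).map fun (x : ℕ) =>
      Lt R n p d ε q Q ((x : ℤ) + 2 + t) 1 (Bsum b 1 (x + 1))).prod)

/-- `Y_t = L^{(t+1, t+p-1)}_{1, b_t} T_{b_t, n - b_t}` (superscripts read modulo `p`). -/
def Y (R : Type*) [CommRing R] (n p d : ℕ) (ε q : R) (Q : Fin d → R)
    (b : ℕ → ℕ) (t : ℕ) : H R n p d ε q Q :=
  LLg R n p d ε q Q ((t : ℤ) + 1) ((t : ℤ) + (p : ℤ) - 1) 1 (b t) *
    Tw R n p d ε q Q 0 (b t) (n - b t)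

/-- `T_b = T^{⟨b_1^{p-2}⟩}_{b_{p-1}, b_p^p} ⋯ T^{⟨b_1^1⟩}_{b_2, b_3^p} T_{b_1, b_2^p}`. -/
def Tcomp (R : Type*) [CommRing R] (n p d : ℕ) (ε q : R) (Q : Fin d → R)
    (b : ℕ → ℕ) : H R n p d ε q Q :=
  ((List.range (p - 1)).map fun (x : ℕ) =>
    Tw R n p d ε q Q (Bsum b 1 (p - 2 - x)) (b (p - 1 - x)) (Bsum b (p - x) p)).prod

end AK


namespace AKAux

/-- Abstract data for the Hecke-algebra relations we need. -/
structure Data (R : Type*) [CommRing R] (A : Type*) [Ring A] [Algebra R A] (q : R) where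
  T : ℕ → A
  L : ℕ → A
  hL0 : L 0 = 1
  hL1 : L 1 = T 0
  hrec : ∀ k, 1 ≤ k → L (k + 1) = Ring.inverse q • (T k * L k * T k)
  hbraid0 : T 0 * T 1 * T 0 * T 1 = T 1 * T 0 * T 1 * T 0
  hbraid : ∀ i, 1 ≤ i → T (i + 1) * T i * T (i + 1) = T i * T (i + 1) * T i
  hcomm : ∀ i j, i + 2 ≤ j → T i * T j = T j * T i
  hq : IsUnit q

variable {R A : Type*} [CommRing R] [Ring A] [Algebra R A] {q : R} (D : Data R A q)

private lemma cmk {x y : A} (h : x * y = y * x) : Commute x y := h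

lemma qL (k : ℕ) (hk : 1 ≤ k) : q • D.L (k + 1) = D.T k * D.L k * D.T k := by
  rw [D.hrec k hk, smul_smul, Ring.mul_inverse_cancel _ D.hq, one_smul]

include D in
lemma cancel {x y : A} (h : q • x = q • y) : x = y := by
  have h2 := congrArg (fun z => Ring.inverse q • z) h
  simpa [smul_smul, Ring.inverse_mul_cancel _ D.hq] using h2

/-- `T i` commutes with `L k` for `i ≥ k + 1`. -/
lemma high : ∀ k i, k + 1 ≤ i → Commute (D.T i) (D.L k)
  | 0, i, _ => by rw [D.hL0]; exact Commute.one_right _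
  | 1, i, h => by rw [D.hL1]; exact cmk (D.hcomm 0 i (by omega)).symm
  | (k + 2), i, h => by
      rw [D.hrec (k + 1) (by omega)]
      exact Commute.smul_right
        ((Commute.mul_right (Commute.mul_right (cmk (D.hcomm (k + 1) i (by omega)).symm)
          (high (k + 1) i (by omega))) (cmk (D.hcomm (k + 1) i (by omega)).symm))) _

section Words

variable (a b x : A)

lemma word1 (hbr : a * b * a = b * a * b) (hax : a * x = x * a)
    (hih : b * x * b * x = x * b * x * b) :
    a * b * x * b * a * b * x * b = b * x * b * a * b * x * b * a := by
  calc a * b * x * b * a * b * x * b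
      = a * b * x * (b * a * b) * (x * b) := by simp only [mul_assoc]
    _ = a * b * x * (a * b * a) * (x * b) := by rw [← hbr]
    _ = a * b * (x * a) * (b * a * x * b) := by simp only [mul_assoc]
    _ = a * b * (a * x) * (b * a * x * b) := by rw [← hax]
    _ = a * b * a * x * b * (a * x) * b := by simp only [mul_assoc]
    _ = a * b * a * x * b * (x * a) * b := by rw [hax]
    _ = (a * b * a) * (x * b * x * a * b) := by simp only [mul_assoc]
    _ = (b * a * b) * (x * b * x * a * b) := by rw [hbr]
    _ = b * a * (b * x * b * x) * (a * b) := by simp only [mul_assoc]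
    _ = b * a * (x * b * x * b) * (a * b) := by rw [hih]
    _ = b * (a * x) * (b * x * b * a * b) := by simp only [mul_assoc]
    _ = b * (x * a) * (b * x * b * a * b) := by rw [hax]
    _ = b * x * a * b * x * (b * a * b) := by simp only [mul_assoc]
    _ = b * x * a * b * x * (a * b * a) := by rw [← hbr]
    _ = b * x * a * b * (x * a) * (b * a) := by simp only [mul_assoc]
    _ = b * x * a * b * (a * x) * (b * a) := by rw [← hax]
    _ = b * x * (a * b * a) * (x * b * a) := by simp only [mul_assoc]
    _ = b * x * (b * a * b) * (x * b * a) := by rw [hbr]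
    _ = b * x * b * a * b * x * b * a := by simp only [mul_assoc]

lemma word2 (hbr2 : b * a * b = a * b * a) (hbx : b * x = x * b) :
    a * (b * a * x * a * b) = b * a * x * a * b * a := by
  calc a * (b * a * x * a * b)
      = (a * b * a) * (x * a * b) := by simp only [mul_assoc]
    _ = (b * a * b) * (x * a * b) := by rw [hbr2]
    _ = b * a * (b * x) * (a * b) := by simp only [mul_assoc]
    _ = b * a * (x * b) * (a * b) := by rw [hbx]
    _ = b * a * x * (b * a * b) := by simp only [mul_assoc]
    _ = b * a * x * (a * b * a) := by rw [hbr2]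
    _ = b * a * x * a * b * a := by simp only [mul_assoc]

end Words

/-- The key braid-type relation `T_k L_k T_k L_k = L_k T_k L_k T_k`. -/
lemma braidL : ∀ k, 1 ≤ k → D.T k * D.L k * D.T k * D.L k = D.L k * D.T k * D.L k * D.T k
  | 1, _ => by rw [D.hL1]; exact D.hbraid0.symm
  | (k + 2), _ => by
      have hk : 1 ≤ k + 1 := by omega
      rw [D.hrec (k + 1) hk]
      have hw := word1 (D.T (k + 2)) (D.T (k + 1)) (D.L (k + 1))
        (D.hbraid (k + 1) hk) (high D (k + 1) (k + 2) (by omega)).eq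
        (braidL (k + 1) hk)
      simp only [smul_mul_assoc, mul_smul_comm, smul_smul]
      congr 1
      simp only [mul_assoc] at hw ⊢
      exact hw

/-- `T i` commutes with `L k` for `k ≥ i + 2`. -/
lemma low : ∀ k i, 1 ≤ i → i + 2 ≤ k → Commute (D.T i) (D.L k) := by
  intro k
  induction k with
  | zero => intro i _ h; omega
  | succ k ih =>
    intro i hi hk
    rcases eq_or_lt_of_le hk with heq | hlt
    · -- k + 1 = i + 2
      have hk1 : k = i + 1 := by omega
      subst hk1
      rw [D.hrec (i + 1) (by omega), D.hrec i hi, mul_smul_comm, smul_mul_assoc]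
      apply Commute.smul_right
      apply Commute.smul_right
      have hw := word2 (D.T i) (D.T (i + 1)) (D.L i)
        (D.hbraid i hi) (high D i (i + 1) (by omega)).eq
      unfold Commute SemiconjBy
      simp only [mul_assoc] at hw ⊢
      exact hw
    · rw [D.hrec k (by omega)]
      exact Commute.smul_right (Commute.mul_right (Commute.mul_right
        (cmk (D.hcomm i k (by omega))) (ih i hi (by omega)))
        (cmk (D.hcomm i k (by omega)))) _

/-- The Jucys–Murphy elements commute pairwise. -/
lemma JMlt : ∀ k j, j < k → Commute (D.L j) (D.L k) := by
  intro k
  induction k with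
  | zero => intro j h; omega
  | succ k ih =>
    intro j hj
    rcases eq_or_lt_of_le (Nat.lt_succ_iff.mp hj) with heq | hlt
    · subst heq
      rcases Nat.eq_zero_or_pos j with h0 | h1
      · subst h0; rw [D.hL0]; exact Commute.one_left _
      · rw [D.hrec j h1]
        apply Commute.smul_right
        have hw := (braidL D j h1).symm
        unfold Commute SemiconjBy
        simp only [mul_assoc] at hw ⊢
        exact hw
    · have hk : 1 ≤ k := by omega
      rw [D.hrec k hk]
      exact Commute.smul_right (Commute.mul_right (Commute.mul_right
        (high D j k (by omega)).symm (ih j hlt)) (high D j k (by omega)).symm) _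

lemma JM (j k : ℕ) : Commute (D.L j) (D.L k) := by
  rcases lt_trichotomy j k with h | h | h
  · exact JMlt D k j h
  · rw [h]
  · exact (JMlt D j k h).symm

section Quad

variable {i : ℕ} (hi : 1 ≤ i)
variable (hquad : D.T i * D.T i = (q - 1) • D.T i + algebraMap R A q)

include hi

/-- `T i` commutes with `L i * L (i+1)`. -/
lemma comm_pair_mul : Commute (D.T i) (D.L i * D.L (i + 1)) := by
  apply cancel D
  have hb := braidL D i hi
  calc q • (D.T i * (D.L i * D.L (i + 1)))
      = D.T i * D.L i * (q • D.L (i + 1)) := by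
        simp only [mul_smul_comm, mul_assoc]
    _ = D.T i * D.L i * (D.T i * D.L i * D.T i) := by rw [qL D i hi]
    _ = (D.T i * D.L i * D.T i * D.L i) * D.T i := by simp only [mul_assoc]
    _ = (D.L i * D.T i * D.L i * D.T i) * D.T i := by rw [hb]
    _ = D.L i * ((D.T i * D.L i * D.T i) * D.T i) := by simp only [mul_assoc]
    _ = D.L i * ((q • D.L (i + 1)) * D.T i) := by rw [qL D i hi]
    _ = q • (D.L i * D.L (i + 1) * D.T i) := by
        simp only [mul_smul_comm, smul_mul_assoc, mul_assoc]

include hquad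

lemma hTL : D.T i * D.L (i + 1) = D.L i * D.T i + (q - 1) • D.L (i + 1) := by
  apply cancel D
  calc q • (D.T i * D.L (i + 1))
      = D.T i * (q • D.L (i + 1)) := by rw [mul_smul_comm]
    _ = D.T i * (D.T i * D.L i * D.T i) := by rw [qL D i hi]
    _ = (D.T i * D.T i) * (D.L i * D.T i) := by simp only [mul_assoc]
    _ = ((q - 1) • D.T i + algebraMap R A q) * (D.L i * D.T i) := by rw [hquad]
    _ = (q - 1) • (D.T i * D.L i * D.T i) + q • (D.L i * D.T i) := by
        rw [add_mul, smul_mul_assoc, ← Algebra.smul_def]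
        simp only [mul_assoc]
    _ = (q - 1) • (q • D.L (i + 1)) + q • (D.L i * D.T i) := by rw [qL D i hi]
    _ = q • (D.L i * D.T i + (q - 1) • D.L (i + 1)) := by
        rw [smul_add, smul_comm ((q : R) - 1) q, add_comm]

lemma hLT : D.L (i + 1) * D.T i = D.T i * D.L i + (q - 1) • D.L (i + 1) := by
  apply cancel D
  calc q • (D.L (i + 1) * D.T i)
      = (q • D.L (i + 1)) * D.T i := by rw [smul_mul_assoc]
    _ = D.T i * D.L i * D.T i * D.T i := by rw [qL D i hi]
    _ = D.T i * D.L i * (D.T i * D.T i) := by simp only [mul_assoc]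
    _ = D.T i * D.L i * ((q - 1) • D.T i + algebraMap R A q) := by rw [hquad]
    _ = (q - 1) • (D.T i * D.L i * D.T i) + q • (D.T i * D.L i) := by
        rw [mul_add, mul_smul_comm, ← Algebra.commutes, ← Algebra.smul_def]
    _ = (q - 1) • (q • D.L (i + 1)) + q • (D.T i * D.L i) := by rw [qL D i hi]
    _ = q • (D.T i * D.L i + (q - 1) • D.L (i + 1)) := by
        rw [smul_add, smul_comm ((q : R) - 1) q, add_comm]

/-- `T i` commutes with `L i + L (i+1)`. -/
lemma comm_pair_add : Commute (D.T i) (D.L i + D.L (i + 1)) := by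
  unfold Commute SemiconjBy
  rw [mul_add, add_mul, hTL D hi hquad, hLT D hi hquad]
  abel

/-- `T i` commutes with `(L i - c)(L (i+1) - c)`. -/
lemma comm_pair_c (c : R) :
    Commute (D.T i) ((D.L i - algebraMap R A c) * (D.L (i + 1) - algebraMap R A c)) := by
  have hc : algebraMap R A c * D.L i = D.L i * algebraMap R A c := Algebra.commutes c (D.L i)
  have expand : (D.L i - algebraMap R A c) * (D.L (i + 1) - algebraMap R A c)
      = D.L i * D.L (i + 1) - algebraMap R A c * (D.L i + D.L (i + 1))
        + algebraMap R A c * algebraMap R A c := by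
    calc (D.L i - algebraMap R A c) * (D.L (i + 1) - algebraMap R A c)
        = D.L i * D.L (i + 1) - D.L i * algebraMap R A c - algebraMap R A c * D.L (i + 1)
          + algebraMap R A c * algebraMap R A c := by noncomm_ring
      _ = D.L i * D.L (i + 1) - algebraMap R A c * D.L i - algebraMap R A c * D.L (i + 1)
          + algebraMap R A c * algebraMap R A c := by rw [hc]
      _ = _ := by noncomm_ring
  rw [expand]
  exact Commute.add_right
    (Commute.sub_right (comm_pair_mul D hi)
      (Commute.mul_right (cmk (Algebra.commutes c (D.T i)).symm)
        (comm_pair_add D hi hquad)))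
    (Commute.mul_right (cmk (Algebra.commutes c (D.T i)).symm)
      (cmk (Algebra.commutes c (D.T i)).symm))

end Quad

/-- `F_k(cs) = ∏_{c ∈ cs} (L_k - c)`. -/
def Fp (L : ℕ → A) (k : ℕ) (cs : List R) : A :=
  (cs.map fun c => L k - algebraMap R A c).prod

lemma Fp_comm {y : A} (k : ℕ) (h : Commute y (D.L k)) (cs : List R) :
    Commute y (Fp D.L k cs) := by
  induction cs with
  | nil =>
      simp only [Fp, List.map_nil, List.prod_nil]
      exact Commute.one_right y
  | cons c cs ih =>
      rw [Fp, List.map_cons, List.prod_cons]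
      exact Commute.mul_right (h.sub_right (cmk (Algebra.commutes c y).symm)) ih

lemma pair_comm {i : ℕ} (hi : 1 ≤ i)
    (hquad : D.T i * D.T i = (q - 1) • D.T i + algebraMap R A q) (cs : List R) :
    Commute (D.T i) (Fp D.L i cs * Fp D.L (i + 1) cs) := by
  induction cs with
  | nil => simp [Fp]
  | cons c cs ih =>
      have hB : Commute (D.L (i + 1) - algebraMap R A c) (D.L i) :=
        Commute.sub_left (JM D (i + 1) i) (cmk (Algebra.commutes c (D.L i)))
      have hFB : Commute (D.L (i + 1) - algebraMap R A c) (Fp D.L i cs) :=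
        Fp_comm D i hB cs
      have hre : Fp D.L i (c :: cs) * Fp D.L (i + 1) (c :: cs)
          = ((D.L i - algebraMap R A c) * (D.L (i + 1) - algebraMap R A c))
            * (Fp D.L i cs * Fp D.L (i + 1) cs) := by
        rw [Fp, Fp, List.map_cons, List.map_cons, List.prod_cons, List.prod_cons]
        calc (D.L i - algebraMap R A c) * (Fp D.L i cs)
              * ((D.L (i + 1) - algebraMap R A c) * Fp D.L (i + 1) cs)
            = (D.L i - algebraMap R A c) * ((Fp D.L i cs) * (D.L (i + 1) - algebraMap R A c))
              * Fp D.L (i + 1) cs := by simp only [mul_assoc, Fp]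
          _ = (D.L i - algebraMap R A c) * ((D.L (i + 1) - algebraMap R A c) * Fp D.L i cs)
              * Fp D.L (i + 1) cs := by rw [hFB.symm.eq]
          _ = _ := by simp only [mul_assoc, Fp]
      rw [hre]
      exact Commute.mul_right (comm_pair_c D hi hquad c) ih

/-- The big product `∏_{k=l}^{m} F_k(cs)`. -/
def Pr (L : ℕ → A) (cs : List R) (l m : ℕ) : A :=
  ((List.range (m + 1 - l)).map fun x => Fp L (l + x) cs).prod

lemma Pr_split (L : ℕ → A) (cs : List R) {l u m : ℕ} (hu : 1 ≤ u) (hlu : l ≤ u)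
    (hum : u ≤ m + 1) : Pr L cs l m = Pr L cs l (u - 1) * Pr L cs u m := by
  unfold Pr
  rw [show u - 1 + 1 - l = u - l by omega,
    show m + 1 - l = (u - l) + (m + 1 - u) by omega, List.range_add, List.map_append,
    List.prod_append, List.map_map]
  congr 1
  apply congrArg
  apply List.map_congr_left
  intro a _
  simp only [Function.comp_apply]
  rw [show l + (u - l + a) = u + a by omega]

lemma comm_L_Pr (j : ℕ) (cs : List R) (l m : ℕ) : Commute (D.L j) (Pr D.L cs l m) := by
  apply Commute.list_prod_right
  intro z hz
  simp only [List.mem_map, List.mem_range] at hz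
  obtain ⟨x, _, rfl⟩ := hz
  exact Fp_comm D _ (JM D j (l + x)) cs

lemma Pr_pair (i : ℕ) (cs : List R) :
    Pr D.L cs i (i + 1) = Fp D.L i cs * Fp D.L (i + 1) cs := by
  unfold Pr
  rw [show i + 1 + 1 - i = 2 by omega]
  show (List.map _ [0, 1]).prod = _
  simp

lemma comm_T_Pr {i : ℕ} (hi : 1 ≤ i)
    (hquad : D.T i * D.T i = (q - 1) • D.T i + algebraMap R A q)
    (cs : List R) {l m : ℕ} (hl : 1 ≤ l) (hlm : l ≤ m) (hil : i ≠ l - 1) (him : i ≠ m) :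
    Commute (D.T i) (Pr D.L cs l m) := by
  rcases lt_or_ge i l with hlo | hge
  · -- i ≤ l - 2
    apply Commute.list_prod_right
    intro z hz
    simp only [List.mem_map, List.mem_range] at hz
    obtain ⟨x, _, rfl⟩ := hz
    exact Fp_comm D _ (low D (l + x) i hi (by omega)) cs
  rcases lt_or_ge m i with hhi | hile
  · apply Commute.list_prod_right
    intro z hz
    simp only [List.mem_map, List.mem_range] at hz
    obtain ⟨x, hx, rfl⟩ := hz
    exact Fp_comm D _ (high D (l + x) i (by omega)) cs
  · -- l ≤ i < m
    have him' : i < m := lt_of_le_of_ne hile him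
    rw [Pr_split D.L cs (l := l) (u := i) (m := m) hi hge (by omega),
      Pr_split D.L cs (l := i) (u := i + 2) (m := m) (by omega) (by omega) (by omega),
      show i + 2 - 1 = i + 1 by omega, Pr_pair D i cs]
    have h1 : Commute (D.T i) (Pr D.L cs l (i - 1)) := by
      apply Commute.list_prod_right
      intro z hz
      simp only [List.mem_map, List.mem_range] at hz
      obtain ⟨x, hx, rfl⟩ := hz
      exact Fp_comm D _ (high D (l + x) i (by omega)) cs
    have h3 : Commute (D.T i) (Pr D.L cs (i + 2) m) := by
      apply Commute.list_prod_right
      intro z hz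
      simp only [List.mem_map, List.mem_range] at hz
      obtain ⟨x, hx, rfl⟩ := hz
      exact Fp_comm D _ (low D (i + 2 + x) i hi (by omega)) cs
    exact Commute.mul_right h1 (Commute.mul_right (pair_comm D hi hquad cs) h3)

end AKAux

namespace AKAux

section Bridge

variable (R : Type*) [CommRing R] (n p d : ℕ) (ε q : R) (Q : Fin d → R)

/-- The Ariki–Koike algebra satisfies the abstract relations. -/
def mkData (hq : IsUnit q) : Data R (AK.H R n p d ε q Q) q where
  T := AK.T R n p d ε q Q
  L := AK.L R n p d ε q Q
  hL0 := rfl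
  hL1 := rfl
  hrec := by
    intro k hk
    obtain ⟨j, rfl⟩ : ∃ j, k = j + 1 := ⟨k - 1, by omega⟩
    rw [Algebra.smul_def]
    show algebraMap _ _ (Ring.inverse q) * AK.T R n p d ε q Q (j + 1) *
        AK.L R n p d ε q Q (j + 1) * AK.T R n p d ε q Q (j + 1) = _
    simp only [mul_assoc]
  hbraid0 := by
    have h := RingQuot.mkAlgHom_rel R
      (AK.Rel.braid0 (n := n) (p := p) (d := d) (ε := ε) (q := q) (Q := Q))
    simp only [map_mul] at h
    unfold AK.T
    exact h
  hbraid := by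
    intro i hi
    by_cases h2 : i ≤ n - 2
    · have h := RingQuot.mkAlgHom_rel R
        (AK.Rel.braid (n := n) (p := p) (d := d) (ε := ε) (q := q) (Q := Q) i hi h2)
      simp only [map_mul] at h
      unfold AK.T
      exact h
    · have hz : AK.T R n p d ε q Q (i + 1) = 0 := by
        unfold AK.T AK.gen
        rw [dif_neg (by omega)]
        exact map_zero _
      rw [hz]
      simp
  hcomm := by
    intro i j hij
    by_cases hj : j < n
    · have h := RingQuot.mkAlgHom_rel R
        (AK.Rel.comm (n := n) (p := p) (d := d) (ε := ε) (q := q) (Q := Q) i j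
          (by omega) (by omega))
      simp only [map_mul] at h
      unfold AK.T
      exact h
    · have hz : AK.T R n p d ε q Q j = 0 := by
        unfold AK.T AK.gen
        rw [dif_neg (by omega)]
        exact map_zero _
      rw [hz]
      simp
  hq := hq

/-- The quadratic relation for in-range generators. -/
lemma quad_of {i : ℕ} (hi : 1 ≤ i) (hin : i < n) :
    AK.T R n p d ε q Q i * AK.T R n p d ε q Q i
      = (q - 1) • AK.T R n p d ε q Q i + algebraMap R (AK.H R n p d ε q Q) q := by
  have h := RingQuot.mkAlgHom_rel R
    (AK.Rel.quadratic (n := n) (p := p) (d := d) (ε := ε) (q := q) (Q := Q) i hi (by omega))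
  simp only [map_mul, map_sub, map_add, map_one, map_zero, AlgHom.commutes] at h
  unfold AK.T
  rw [← sub_eq_zero]
  calc RingQuot.mkAlgHom R _ (AK.gen R n i) * RingQuot.mkAlgHom R _ (AK.gen R n i)
        - ((q - 1) • RingQuot.mkAlgHom R _ (AK.gen R n i)
          + algebraMap R (AK.H R n p d ε q Q) q)
      = (RingQuot.mkAlgHom R _ (AK.gen R n i) - algebraMap R (AK.H R n p d ε q Q) q)
          * (RingQuot.mkAlgHom R _ (AK.gen R n i) + 1) := by
        rw [show (q - 1) • RingQuot.mkAlgHom R (AK.Rel R n p d ε q Q) (AK.gen R n i)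
            = algebraMap R (AK.H R n p d ε q Q) (q - 1) *
              RingQuot.mkAlgHom R (AK.Rel R n p d ε q Q) (AK.gen R n i) from
          Algebra.smul_def _ _, map_sub, map_one]
        simp only [sub_mul, one_mul, mul_add, mul_one, mul_sub]
        abel
    _ = 0 := h

lemma Ls_eq (s : ℤ) (k : ℕ) :
    AK.Ls R n p d ε q Q s k
      = Fp (AK.L R n p d ε q Q) k (List.ofFn fun a : Fin d => AK.epow R p ε s * Q a) := by
  unfold AK.Ls Fp
  rw [← List.prod_ofFn, map_list_prod, List.map_ofFn, List.map_ofFn]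
  exact congrArg List.prod (congrArg List.ofFn (funext fun a => by simp [Function.comp]))

lemma Lt_eq (t : ℤ) (l m : ℕ) :
    AK.Lt R n p d ε q Q t l m
      = Pr (AK.L R n p d ε q Q) (List.ofFn fun a : Fin d => AK.epow R p ε t * Q a) l m := by
  unfold AK.Lt AK.LLg Pr
  rw [show t + 1 - t = (1 : ℤ) by ring]
  simp only [Int.toNat_one, show List.range 1 = [0] from rfl, List.map_cons, List.map_nil,
    List.prod_cons, List.prod_nil, mul_one, Nat.cast_zero, add_zero, Ls_eq]

end Bridge

end AKAux

/-- In the Ariki-Koike algebra `H`, suppose `1 <= l < m <= n` and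
`1 <= t <= p`.  Then `T_i L^(t)_(l,m) = L^(t)_(l,m) T_i` and `L_j L^(t)_(l,m) = L^(t)_(l,m) L_j`,
for all `i, j` with `1 <= i < n`, `1 <= j <= n`, `i ≠ l-1` and `i ≠ m`. -/
theorem stmt_9 (R : Type*) [CommRing R] (n p d : ℕ) (hn : 3 ≤ n) (hp : 2 ≤ p) (hd : 1 ≤ d)
    (ε q : R) (Q : Fin d → R) (hε : IsPrimitiveRoot ε p)
    (hq : IsUnit q) (hQ : ∀ i, IsUnit (Q i)) :
    ∀ l m t : ℕ, 1 ≤ l → l < m → m ≤ n → 1 ≤ t → t ≤ p →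
      ∀ i j : ℕ, 1 ≤ i → i < n → 1 ≤ j → j ≤ n → i ≠ l - 1 → i ≠ m →
        AK.T R n p d ε q Q i * AK.Lt R n p d ε q Q (t : ℤ) l m =
            AK.Lt R n p d ε q Q (t : ℤ) l m * AK.T R n p d ε q Q i ∧
          AK.L R n p d ε q Q j * AK.Lt R n p d ε q Q (t : ℤ) l m =
            AK.Lt R n p d ε q Q (t : ℤ) l m * AK.L R n p d ε q Q j := by
  intro l m t hl hlm hmn ht htp i j hi hin hj hjn hil him
  constructor
  · rw [AKAux.Lt_eq]
    exact (AKAux.comm_T_Pr (AKAux.mkData R n p d ε q Q hq) hi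
      (AKAux.quad_of R n p d ε q Q hi hin) _ hl (le_of_lt hlm) hil him).eq
  · rw [AKAux.Lt_eq]
    exact (AKAux.comm_L_Pr (AKAux.mkData R n p d ε q Q hq) j _ l m).eq
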